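/- arXiv:2105.13408 — 2 statements merged into one kernel-verified Lean document; each statement's English description precedes it below -/
import Mathlib

section
/- For m ∈ ℕ and 0 ≤ i ≤ n, every nonzero ideal of R_mG_i contains the element p^{m−1}(σ−1)^{p^i−1} = p^{m−1}(1+σ+⋯+σ^{p^i−1}). -/
open scoped BigOperators

/-- `U_i = 1 + p^i ℤ` as a subset of `ℤ`. -/
def Uset (p i : ℕ) : Set ℤ := {d : ℤ | ∃ k : ℤ, d = 1 + (p : ℤ) ^ i * k}

/-- `−U_i = {−u : u ∈ U_i}` as a subset of `ℤ`. -/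
def negUset (p i : ℕ) : Set ℤ := {d : ℤ | -d ∈ Uset p i}

/-- The coefficient ring `R_m = ℤ/p^mℤ`. -/
abbrev Rm (p m : ℕ) : Type := ZMod (p ^ m)

/-- The cyclic group of order `p^n`, written multiplicatively. -/
abbrev Cyc (p n : ℕ) : Type := Multiplicative (ZMod (p ^ n))

/-- The group ring `R_m G_n` of the cyclic group of order `p^n` over `ℤ/p^mℤ`. -/
abbrev RG (p m n : ℕ) : Type := MonoidAlgebra (Rm p m) (Cyc p n)

/-- The distinguished generator `σ` of the cyclic group of order `p^n`,
viewed as an element of the group ring `R_m G_n`. -/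
noncomputable def sg (p m n : ℕ) : RG p m n :=
  MonoidAlgebra.of (Rm p m) (Cyc p n) (Multiplicative.ofAdd (1 : ZMod (p ^ n)))

/-- The norm operator `P(i,j) = Σ_{k=0}^{p^{i-j}-1} σ^{k p^j}` in `R_m G_n`. -/
noncomputable def Pel (p m n i j : ℕ) : RG p m n :=
  ∑ k ∈ Finset.range (p ^ (i - j)), sg p m n ^ (k * p ^ j)

/-- The operator `Q_d(i,j) = Σ_{k=0}^{p^{i-j}-1} (d^{p^j})^{p^{i-j}-1-k} (σ^{p^j})^k` in `R_m G_n`. -/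
noncomputable def Qel (p m n : ℕ) (d : ℤ) (i j : ℕ) : RG p m n :=
  ∑ k ∈ Finset.range (p ^ (i - j)),
    ((d : RG p m n) ^ p ^ j) ^ (p ^ (i - j) - 1 - k) * sg p m n ^ (p ^ j * k)

/-- `p^a` for `a ∈ {−∞} ∪ ℕ`, with the convention `p^{−∞} = 0`. -/
def pexp (p : ℕ) (a : WithBot ℕ) : ℕ := WithBot.recBotCoe 0 (fun k => p ^ k) a

/-- `σ^{p^a}` for `a ∈ {−∞} ∪ ℕ`, with the convention `σ^{p^{−∞}} = 0`. -/
noncomputable def sigmaPow (p m n : ℕ) (a : WithBot ℕ) : RG p m n :=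
  WithBot.recBotCoe 0 (fun k => sg p m n ^ p ^ k) a

/-- `P(i,c)` for `c ∈ {−∞} ∪ ℕ`, with the convention `P(i,−∞) = 1`. -/
noncomputable def PelW (p m n i : ℕ) (c : WithBot ℕ) : RG p m n :=
  WithBot.recBotCoe 1 (fun k => Pel p m n i k) c

/-- The submodule of relations defining `X_{a,d,m}`: the free module on generators
`y = e 0` and `x_i = e (i+1)` modulo `(σ-d)y = Σ p^i x_i` and `σ^{p^{a_i}} x_i = x_i`
(where `σ^{p^{−∞}} x_i = 0`). -/
noncomputable def Xrel (p m n : ℕ) (a : ℕ → WithBot ℕ) (d : ℤ) :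
    Submodule (RG p m n) (Fin (m + 1) → RG p m n) :=
  Submodule.span (RG p m n)
    (insert
      ((sg p m n - (d : RG p m n)) •
          (Pi.single (0 : Fin (m + 1)) 1 : Fin (m + 1) → RG p m n) -
        ∑ i : Fin m, ((p : RG p m n) ^ (i : ℕ)) •
          (Pi.single i.succ 1 : Fin (m + 1) → RG p m n))
      (Set.range fun i : Fin m =>
        (sigmaPow p m n (a (i : ℕ)) - 1) •
          (Pi.single i.succ 1 : Fin (m + 1) → RG p m n)))

/-- The `R_m G`-module `X_{a,d,m}`. -/
abbrev Xmod (p m n : ℕ) (a : ℕ → WithBot ℕ) (d : ℤ) : Type :=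
  (Fin (m + 1) → RG p m n) ⧸ Xrel p m n a d

/-- The generator `y` of `X_{a,d,m}`. -/
noncomputable def Xy (p m n : ℕ) (a : ℕ → WithBot ℕ) (d : ℤ) : Xmod p m n a d :=
  Submodule.Quotient.mk (Pi.single (0 : Fin (m + 1)) 1 : Fin (m + 1) → RG p m n)

/-- The generator `x_i` of `X_{a,d,m}`. -/
noncomputable def Xx (p m n : ℕ) (a : ℕ → WithBot ℕ) (d : ℤ) (i : Fin m) : Xmod p m n a d :=
  Submodule.Quotient.mk (Pi.single i.succ 1 : Fin (m + 1) → RG p m n)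

/-- A module is indecomposable if it is nonzero and is not the direct sum of two
nonzero submodules. -/
def IsIndecomposableModule (R M : Type*) [Ring R] [AddCommGroup M] [Module R M] : Prop :=
  Nontrivial M ∧ ∀ V W : Submodule R M, IsCompl V W → V = ⊥ ∨ W = ⊥

/-- Hypotheses (I)–(V) of Theorem 1, together with the requirement
`a ∈ {−∞,0,1,…,n}^m`. -/
def Hyp (p n m : ℕ) (a : ℕ → WithBot ℕ) (d : ℤ) : Prop :=
  (∀ i < m, a i ≤ (n : WithBot ℕ)) ∧
  d ∈ Uset p 1 ∧
  (∀ i < m, d ^ pexp p (a i) ∈ Uset p (i + 1)) ∧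
  (∀ i j : ℕ, i < m → 1 ≤ j → i + j < m → a (i + j) ≠ ⊥ →
    ¬(p = 2 ∧ d ∉ Uset p 2 ∧ i = 0 ∧ a 0 = 0) →
    a i + (j : WithBot ℕ) < a (i + j)) ∧
  (p = 2 → d ∉ Uset p 2 → a 0 = 0 → ∀ j, 1 ≤ j → j < m → a j ≠ 0) ∧
  (p = 2 → n = 1 → a 0 = ⊥) ∧
  (∀ v : ℕ, p = 2 → 2 ≤ m → 2 ≤ v → d ∈ negUset p v → d ∉ negUset p (v + 1) →
    a 0 = 0 → ∀ i, v ≤ i → i < m → ((i - (v - 1) : ℕ) : WithBot ℕ) < a i ∧ a i ≠ ⊥)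

/-- The invariant `l(u)`: the dimension over `F_p` of the `F_p G`-submodule of `M/pM`
generated by the class of `u`; equivalently the least `k` with `(σ-1)^k u ∈ pM`. -/
noncomputable def ell (p m n : ℕ) {M : Type*} [AddCommGroup M] [Module (RG p m n) M]
    (u : M) : ℕ :=
  sInf {k : ℕ | ((sg p m n - 1) ^ k) • u ∈
    (Ideal.span {(p : RG p m n)} • (⊤ : Submodule (RG p m n) M) : Submodule (RG p m n) M)}

/-- `M^⋆ = {u ∈ M : (σ-1)u = 0 and pu = 0}`. -/
def Mstar (p m n : ℕ) (M : Type*) [AddCommGroup M] [Module (RG p m n) M] : Set M :=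
  {u : M | (sg p m n - 1) • u = 0 ∧ (p : RG p m n) • u = 0}
/-- The group ring `ℤG` of the cyclic group of order `p^n`. -/
abbrev ZG (p n : ℕ) : Type := MonoidAlgebra ℤ (Cyc p n)

/-- The generator `σ` as an element of `ℤG`. -/
noncomputable def sgZ (p n : ℕ) : ZG p n :=
  MonoidAlgebra.of ℤ (Cyc p n) (Multiplicative.ofAdd (1 : ZMod (p ^ n)))

/-- The norm operator `P(i,j)` as an element of `ℤG`. -/
noncomputable def PelZ (p n i j : ℕ) : ZG p n :=
  ∑ k ∈ Finset.range (p ^ (i - j)), sgZ p n ^ (k * p ^ j)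

/-- The additive map `φ_d : ℤG → ℤ` induced by `σ^t ↦ d^t` for `0 ≤ t < p^n`. -/
noncomputable def phiZ (p n : ℕ) (d : ℤ) (f : ZG p n) : ℤ :=
  ∑ t ∈ Finset.range (p ^ n), f.coeff (Multiplicative.ofAdd ((t : ℕ) : ZMod (p ^ n))) * d ^ t

/-- The map `φ_d^{(m)} : R_m G_n → R_m` induced by `σ^t ↦ d^t` for `0 ≤ t < p^n`. -/
noncomputable def phiM (p m n : ℕ) (d : ℤ) (f : RG p m n) : Rm p m :=
  ∑ t ∈ Finset.range (p ^ n), f.coeff (Multiplicative.ofAdd ((t : ℕ) : ZMod (p ^ n))) * (d : Rm p m) ^ t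

/-- The natural `R_m`-algebra homomorphism `χ_j : R_m G_i → R_m G_j` for `j ≤ i`. -/
noncomputable def chiMap (p m : ℕ) {i j : ℕ} (h : j ≤ i) : RG p m i →+* RG p m j :=
  MonoidAlgebra.mapDomainRingHom (Rm p m)
    (AddMonoidHom.toMultiplicative
      ((ZMod.castHom (pow_dvd_pow p h) (ZMod (p ^ j))).toAddMonoidHom))

/-- Coefficient reduction `R_m G_n → R_{m-1} G_n`. -/
noncomputable def barMap (p m n : ℕ) (f : RG p m n) : RG p (m - 1) n :=
  MonoidAlgebra.ofCoeff (Finsupp.mapRange (ZMod.castHom (pow_dvd_pow p (Nat.sub_le m 1)) (ZMod (p ^ (m - 1))))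
    (map_zero _) f.coeff)

/-- `W/p^{m-1}W` is a free `R_{m-1}G_k`-module: there is an additive isomorphism with
a finite power of `R_{m-1}G_k` intertwining the actions of `σ` (and hence of the
coefficients, which act through the additive group structure). -/
def QuotFree (p m n k : ℕ) {M : Type*} [AddCommGroup M] [Module (RG p m n) M]
    (W : Submodule (RG p m n) M) : Prop :=
  ∃ (r : ℕ) (e : (W ⧸ (Ideal.span {(p : RG p m n) ^ (m - 1)} •
      (⊤ : Submodule (RG p m n) W))) ≃+ (Fin r → RG p (m - 1) k)),
    ∀ q, e (sg p m n • q) = fun s => sg p (m - 1) k * e q s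
namespace Lemma35Aux

open MonoidAlgebra Polynomial Finset

theorem poly_geom (q : ℕ) (hq : q.Prime) (N : ℕ) (hN : ∃ j, N = q ^ j) :
    (X - 1 : Polynomial (ZMod q)) ^ (N - 1) = ∑ k ∈ Finset.range N, (X : Polynomial (ZMod q)) ^ k := by
  haveI : Fact q.Prime := ⟨hq⟩
  obtain ⟨j, rfl⟩ := hN
  have hX : (X - 1 : Polynomial (ZMod q)) ≠ 0 := by
    have := Polynomial.X_sub_C_ne_zero (R := ZMod q) 1
    simpa using this
  apply mul_right_cancel₀ hX
  have h1 : (X - 1 : Polynomial (ZMod q)) ^ (q ^ j) = X ^ (q ^ j) - 1 := by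
    have := sub_pow_char_pow (R := Polynomial (ZMod q)) (p := q) (n := j) X 1
    simpa using this
  have hpj : 1 ≤ q ^ j := Nat.one_le_pow j q hq.pos
  calc (X - 1 : Polynomial (ZMod q)) ^ (q ^ j - 1) * (X - 1)
      = (X - 1) ^ (q ^ j) := by rw [← pow_succ, Nat.sub_add_cancel hpj]
    _ = X ^ (q ^ j) - 1 := h1
    _ = (∑ k ∈ Finset.range (q ^ j), (X : Polynomial (ZMod q)) ^ k) * (X - 1) :=
        (geom_sum_mul X (q ^ j)).symm

theorem sg_pow (p m i k : ℕ) :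
    sg p m i ^ k =
      MonoidAlgebra.single (Multiplicative.ofAdd ((k : ZMod (p ^ i)))) (1 : Rm p m) := by
  rw [sg, ← map_pow, MonoidAlgebra.of_apply]
  congr 1
  rw [← ofAdd_nsmul]
  congr 1
  simp [nsmul_eq_mul]

theorem sg_orderpow (p m i : ℕ) : sg p m i ^ (p ^ i) = 1 := by
  rw [sg_pow]
  simp [MonoidAlgebra.one_def, ZMod.natCast_self]

theorem Pel_eq (p m i : ℕ) : Pel p m i i 0 = ∑ k ∈ Finset.range (p ^ i), sg p m i ^ k := by
  simp [Pel]

/-- coefficient reduction `R_m G_i → R_1 G_i` as ring hom -/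
noncomputable def redPi (p m i : ℕ) (hm : 1 ≤ m) : RG p m i →+* RG p 1 i :=
  MonoidAlgebra.liftNCRingHom
    (MonoidAlgebra.singleOneRingHom.comp (ZMod.castHom (pow_dvd_pow p hm) (ZMod (p ^ 1))))
    (MonoidAlgebra.of (Rm p 1) (Cyc p i))
    (fun _ _ => Commute.all _ _)

theorem redPi_single (p m i : ℕ) (hm : 1 ≤ m) (a : Cyc p i) (b : Rm p m) :
    redPi p m i hm (MonoidAlgebra.single a b)
      = MonoidAlgebra.single a (ZMod.castHom (pow_dvd_pow p hm) (ZMod (p ^ 1)) b) := by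
  classical
  show MonoidAlgebra.liftNC _ _ _ = _
  rw [MonoidAlgebra.liftNC_single]
  simp only [AddMonoidHom.coe_coe, RingHom.coe_comp, Function.comp_apply,
    MonoidAlgebra.singleOneRingHom_apply, MonoidAlgebra.of_apply, ZeroHom.toFun_eq_coe]
  change MonoidAlgebra.single 1 _ * _ = _
  rw [MonoidAlgebra.single_mul_single, one_mul, mul_one]

theorem redPi_sg (p m i : ℕ) (hm : 1 ≤ m) : redPi p m i hm (sg p m i) = sg p 1 i := by
  have h1 := sg_pow p m i 1
  have h2 := sg_pow p 1 i 1
  rw [pow_one, Nat.cast_one] at h1 h2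
  rw [h1, h2, redPi_single]
  congr 1
  exact map_one _

theorem redPi_apply (p m i : ℕ) (hm : 1 ≤ m) (f : RG p m i) (g : Cyc p i) :
    (redPi p m i hm f).coeff g = ZMod.castHom (pow_dvd_pow p hm) (ZMod (p ^ 1)) (f.coeff g) := by
  induction f using MonoidAlgebra.induction_linear with
  | zero => simp
  | add f h hf hh =>
      rw [map_add, MonoidAlgebra.coeff_add, Finsupp.add_apply, hf, hh, MonoidAlgebra.coeff_add,
        Finsupp.add_apply, map_add]
  | single a b =>
      rw [redPi_single]
      simp only [MonoidAlgebra.coeff_single, Finsupp.single_apply]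
      split <;> simp

theorem exists_of_redPi_eq_zero (p m i : ℕ) (hp : p.Prime) (hm : 1 ≤ m) (f : RG p m i)
    (hf : redPi p m i hm f = 0) : ∃ g : RG p m i, f = (p : RG p m i) * g := by
  classical
  haveI : NeZero (p ^ m) := ⟨pow_ne_zero m hp.pos.ne'⟩
  refine ⟨MonoidAlgebra.ofCoeff (Finsupp.mapRange (fun c => ((ZMod.val c / p : ℕ) : Rm p m)) (by simp) f.coeff), ?_⟩
  ext g
  have h0 : (redPi p m i hm f).coeff g = 0 := by rw [hf]; rfl
  rw [redPi_apply] at h0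
  have hdvd : p ∣ (f.coeff g).val := by
    have hv : (((f.coeff g).val : ℕ) : ZMod (p ^ 1)) = 0 := by
      have := map_natCast (ZMod.castHom (pow_dvd_pow p hm) (ZMod (p ^ 1))) (f.coeff g).val
      rw [ZMod.natCast_zmod_val] at this
      rw [← this, h0]
    rw [ZMod.natCast_eq_zero_iff] at hv
    exact dvd_trans (dvd_pow_self p one_ne_zero) hv
  rw [MonoidAlgebra.natCast_def, MonoidAlgebra.coeff_single_one_mul, MonoidAlgebra.coeff_ofCoeff,
    Finsupp.mapRange_apply,
    ← Nat.cast_mul, Nat.mul_div_cancel' hdvd, ZMod.natCast_zmod_val]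

theorem p_pow_m_eq_zero (p m i : ℕ) : (p : RG p m i) ^ m = 0 := by
  have h : ((p ^ m : ℕ) : RG p m i) = 0 := by
    rw [MonoidAlgebra.natCast_def, ZMod.natCast_self]
    simp
  rw [← Nat.cast_pow] at *
  exact h

theorem kill (p m i : ℕ) (hp : p.Prime) (hm : 1 ≤ m) (f : RG p m i)
    (hf : redPi p m i hm f = 0) : (p : RG p m i) ^ (m - 1) * f = 0 := by
  obtain ⟨g, rfl⟩ := exists_of_redPi_eq_zero p m i hp hm f hf
  rw [← mul_assoc, ← pow_succ, Nat.sub_add_cancel hm, p_pow_m_eq_zero, zero_mul]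

theorem char_identity (p : ℕ) (hp : p.Prime) (i : ℕ) :
    (sg p 1 i - 1) ^ (p ^ i - 1) = ∑ k ∈ Finset.range (p ^ i), sg p 1 i ^ k := by
  have hq : (p ^ 1).Prime := by rwa [pow_one]
  have key := poly_geom (p ^ 1) hq (p ^ i) ⟨i, by rw [pow_one]⟩
  have h2 := congrArg (Polynomial.aeval (sg p 1 i)) key
  simpa only [map_pow, map_sub, Polynomial.aeval_X, map_one, map_sum] using h2

theorem redPi_diff (p m i : ℕ) (hp : p.Prime) (hm : 1 ≤ m) :
    redPi p m i hm ((sg p m i - 1) ^ (p ^ i - 1) - Pel p m i i 0) = 0 := by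
  rw [map_sub, map_pow, map_sub, map_one, redPi_sg, Pel_eq, map_sum]
  rw [char_identity p hp i]
  simp [map_pow, redPi_sg]

theorem part2 (p m i : ℕ) (hp : p.Prime) (hm : 1 ≤ m) :
    (p : RG p m i) ^ (m - 1) * (sg p m i - 1) ^ (p ^ i - 1) =
      (p : RG p m i) ^ (m - 1) * Pel p m i i 0 := by
  have h := kill p m i hp hm _ (redPi_diff p m i hp hm)
  rw [mul_sub] at h
  linear_combination h

theorem sg_sub_one_nilpotent (p m i : ℕ) (hp : p.Prime) (hm : 1 ≤ m) :
    (sg p m i - 1) ^ (p ^ i * m) = 0 := by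
  have hred : redPi p m i hm ((sg p m i - 1) ^ (p ^ i)) = 0 := by
    rw [map_pow, map_sub, map_one, redPi_sg]
    have hpi : 1 ≤ p ^ i := Nat.one_le_pow i p hp.pos
    have : (sg p 1 i - 1) ^ (p ^ i) = (sg p 1 i - 1) ^ (p ^ i - 1) * (sg p 1 i - 1) := by
      rw [← pow_succ, Nat.sub_add_cancel hpi]
    rw [this, char_identity p hp i, geom_sum_mul, sg_orderpow, sub_self]
  obtain ⟨g, hg⟩ := exists_of_redPi_eq_zero p m i hp hm _ hred
  rw [pow_mul, hg, mul_pow, p_pow_m_eq_zero, zero_mul]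

theorem pel_apply (p m i : ℕ) (hp : p.Prime) (g : Cyc p i) : (Pel p m i i 0).coeff g = 1 := by
  classical
  haveI : NeZero (p ^ i) := ⟨pow_ne_zero i hp.pos.ne'⟩
  rw [Pel_eq]
  rw [MonoidAlgebra.coeff_sum, Finset.sum_apply']
  have hval : ∀ k ∈ Finset.range (p ^ i),
      (sg p m i ^ k).coeff g = if k = (Multiplicative.toAdd g).val then 1 else 0 := by
    intro k hk
    rw [sg_pow, MonoidAlgebra.coeff_single, Finsupp.single_apply]
    congr 1
    simp only [eq_iff_iff]
    constructor
    · intro h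
      have : ((k : ZMod (p ^ i))) = Multiplicative.toAdd g := by
        have := congrArg Multiplicative.toAdd h
        simpa using this
      rw [← this, ZMod.val_cast_of_lt (Finset.mem_range.mp hk)]
    · intro h
      subst h
      have : ((Multiplicative.toAdd g).val : ZMod (p ^ i)) = Multiplicative.toAdd g :=
        ZMod.natCast_zmod_val _
      rw [this]
      simp
  rw [Finset.sum_congr rfl hval, Finset.sum_ite_eq' (Finset.range (p ^ i))]
  rw [if_pos (Finset.mem_range.mpr (ZMod.val_lt _))]

theorem const_of_sg_fixed (p m i : ℕ) (hp : p.Prime) (y : RG p m i)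
    (hy : sg p m i * y = y) :
    y = MonoidAlgebra.single 1 (y.coeff 1) * Pel p m i i 0 := by
  classical
  have hsg : sg p m i = MonoidAlgebra.single (Multiplicative.ofAdd ((1 : ZMod (p ^ i)))) (1 : Rm p m) := by
    simpa using sg_pow p m i 1
  have hrel : ∀ g : Cyc p i, y.coeff ((Multiplicative.ofAdd ((1 : ZMod (p ^ i))))⁻¹ * g) = y.coeff g := by
    intro g
    have := congrArg (fun f : RG p m i => f.coeff g) hy
    beta_reduce at this
    rw [hsg] at this
    rw [MonoidAlgebra.coeff_single_mul_apply] at this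
    simpa using this
  have hnat : ∀ k : ℕ, y.coeff (Multiplicative.ofAdd ((k : ZMod (p ^ i)))) = y.coeff 1 := by
    intro k
    induction k with
    | zero => simp
    | succ k ih =>
        have h1 := hrel (Multiplicative.ofAdd (((k + 1 : ℕ) : ZMod (p ^ i))))
        have h2 : (Multiplicative.ofAdd ((1 : ZMod (p ^ i))))⁻¹ *
            Multiplicative.ofAdd (((k + 1 : ℕ) : ZMod (p ^ i)))
            = Multiplicative.ofAdd ((k : ZMod (p ^ i))) := by
          rw [← ofAdd_neg, ← ofAdd_add]
          congr 1
          push_cast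
          ring
        rw [h2] at h1
        rw [← h1, ih]
  have hconst : ∀ g : Cyc p i, y.coeff g = y.coeff 1 := by
    intro g
    have : g = Multiplicative.ofAdd (((Multiplicative.toAdd g).val : ZMod (p ^ i))) := by
      haveI : NeZero (p ^ i) := ⟨pow_ne_zero i hp.pos.ne'⟩
      rw [ZMod.natCast_zmod_val]
      simp
    rw [this, hnat]
  ext g
  rw [MonoidAlgebra.coeff_single_one_mul, pel_apply p m i hp, mul_one, hconst]

end Lemma35Aux

/-- Lemma 3.5 (`le:idealrmgi`). -/
theorem nonzero_ideal_contains (p n m : ℕ) (hp : p.Prime) (hm : 1 ≤ m) (i : ℕ) (hin : i ≤ n)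
    (I : Ideal (RG p m i)) (hI : I ≠ ⊥) :
    (p : RG p m i) ^ (m - 1) * (sg p m i - 1) ^ (p ^ i - 1) ∈ I ∧
    (p : RG p m i) ^ (m - 1) * (sg p m i - 1) ^ (p ^ i - 1) =
      (p : RG p m i) ^ (m - 1) * Pel p m i i 0 := by
  classical
  haveI : NeZero (p ^ m) := ⟨pow_ne_zero m hp.pos.ne'⟩
  refine ⟨?_, Lemma35Aux.part2 p m i hp hm⟩
  rw [Lemma35Aux.part2 p m i hp hm]
  obtain ⟨x, hxI, hx0⟩ := Submodule.exists_mem_ne_zero_of_ne_bot hI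
  set T : RG p m i := sg p m i - 1 with hT
  -- kill by powers of (σ - 1)
  have hTfind : ∃ b, T ^ b * x = 0 :=
    ⟨p ^ i * m, by rw [hT, Lemma35Aux.sg_sub_one_nilpotent p m i hp hm, zero_mul]⟩
  have hb0pos : Nat.find hTfind ≠ 0 := by
    intro h
    have hs := Nat.find_spec hTfind
    rw [h, pow_zero, one_mul] at hs
    exact hx0 hs
  set x1 : RG p m i := T ^ (Nat.find hTfind - 1) * x with hx1
  have hx1I : x1 ∈ I := I.mul_mem_left _ hxI
  have hx1ne : x1 ≠ 0 :=
    Nat.find_min hTfind (Nat.sub_lt (Nat.pos_of_ne_zero hb0pos) one_pos)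
  have hTx1 : T * x1 = 0 := by
    rw [hx1, ← mul_assoc, ← pow_succ', Nat.sub_add_cancel (Nat.one_le_iff_ne_zero.mpr hb0pos)]
    exact Nat.find_spec hTfind
  -- kill by powers of p
  have hPfind : ∃ a, (p : RG p m i) ^ a * x1 = 0 :=
    ⟨m, by rw [Lemma35Aux.p_pow_m_eq_zero, zero_mul]⟩
  have ha0pos : Nat.find hPfind ≠ 0 := by
    intro h
    have hs := Nat.find_spec hPfind
    rw [h, pow_zero, one_mul] at hs
    exact hx1ne hs
  set y : RG p m i := (p : RG p m i) ^ (Nat.find hPfind - 1) * x1 with hy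
  have hyI : y ∈ I := I.mul_mem_left _ hx1I
  have hyne : y ≠ 0 :=
    Nat.find_min hPfind (Nat.sub_lt (Nat.pos_of_ne_zero ha0pos) one_pos)
  have hpy : (p : RG p m i) * y = 0 := by
    rw [hy, ← mul_assoc, ← pow_succ', Nat.sub_add_cancel (Nat.one_le_iff_ne_zero.mpr ha0pos)]
    exact Nat.find_spec hPfind
  have hTy : T * y = 0 := by
    rw [hy, mul_left_comm, hTx1, mul_zero]
  have hsgy : sg p m i * y = y := by
    have : (sg p m i - 1) * y = 0 := hTy
    rw [sub_mul, one_mul, sub_eq_zero] at this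
    exact this
  -- y is a constant multiple of the norm element
  have hyeq := Lemma35Aux.const_of_sg_fixed p m i hp y hsgy
  -- p * (y 1) = 0
  have hpc : (p : Rm p m) * y.coeff 1 = 0 := by
    have h1 : ((p : RG p m i) * y).coeff 1 = (0 : RG p m i).coeff 1 := by rw [hpy]
    rwa [MonoidAlgebra.natCast_def, MonoidAlgebra.coeff_single_one_mul, MonoidAlgebra.coeff_zero,
      Finsupp.coe_zero, Pi.zero_apply] at h1
  -- extract p^(m-1) from y 1
  have hvd : p ^ (m - 1) ∣ (y.coeff 1).val := by
    have h1 : ((p * (y.coeff 1).val : ℕ) : ZMod (p ^ m)) = 0 := by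
      rw [Nat.cast_mul, ZMod.natCast_zmod_val]
      exact hpc
    rw [ZMod.natCast_eq_zero_iff] at h1
    have h2 : p * p ^ (m - 1) ∣ p * (y.coeff 1).val := by
      rw [← pow_succ', Nat.sub_add_cancel hm]
      exact h1
    exact (Nat.mul_dvd_mul_iff_left hp.pos).mp h2
  obtain ⟨t, ht⟩ := hvd
  have hy1 : y.coeff 1 = ((p ^ (m - 1) : ℕ) : Rm p m) * ((t : ℕ) : Rm p m) := by
    rw [← Nat.cast_mul, ← ht, ZMod.natCast_zmod_val]
  -- t is a unit mod p^m
  have hpt : ¬ p ∣ t := by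
    intro hdvd
    obtain ⟨s, hs⟩ := hdvd
    apply hyne
    rw [hyeq, hy1, hs]
    have hz : ((p ^ (m - 1) : ℕ) : Rm p m) * ((p * s : ℕ) : Rm p m) = 0 := by
      rw [← Nat.cast_mul, ← mul_assoc, ← pow_succ, Nat.sub_add_cancel hm,
        Nat.cast_mul, ZMod.natCast_self, zero_mul]
    rw [hz]
    simp
  have hunit : IsUnit ((t : ℕ) : Rm p m) := by
    rw [ZMod.isUnit_iff_coprime]
    exact Nat.Coprime.pow_right m (((Nat.Prime.coprime_iff_not_dvd hp).mpr hpt).symm)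
  obtain ⟨u, hu⟩ := hunit
  -- conclude
  have hfinal : MonoidAlgebra.single (1 : Cyc p i) ((u⁻¹ : (Rm p m)ˣ) : Rm p m) * y
      = (p : RG p m i) ^ (m - 1) * Pel p m i i 0 := by
    rw [hyeq, ← mul_assoc, MonoidAlgebra.single_mul_single, one_mul, hy1, ← hu]
    have hc : ((u⁻¹ : (Rm p m)ˣ) : Rm p m) * (((p ^ (m - 1) : ℕ) : Rm p m) * (u : Rm p m))
        = ((p ^ (m - 1) : ℕ) : Rm p m) := by
      rw [mul_comm ((p ^ (m - 1) : ℕ) : Rm p m) (u : Rm p m), ← mul_assoc, Units.inv_mul, one_mul]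
    rw [hc, ← MonoidAlgebra.natCast_def, Nat.cast_pow]
  rw [← hfinal]
  exact I.mul_mem_left _ hyI
end

section
/- Assume the hypotheses (I)–(V) of Theorem 1 hold for p, n, m, a = (a_0,…,a_{m−1}) and d, and let m ≥ 2. Suppose a_{m−1} ≠ −∞ and that for some v ∈ X_{a,d,m} and g_0,…,g_{m−1} ∈ R_mG one has (σ^{p^{a_{m−1}}}−1)v = p^{m−1}Σ_{i=0}^{m−1} g_i x_i in X_{a,d,m}. Then p^{m−1}g_{m−1} lies in the ideal ⟨p^{m−1}(σ−1)^{p^{a_{m−1}}−1}⟩ of R_mG. -/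
open scoped BigOperators

section Aux
open Polynomial
lemma sg_pow (p m n t : ℕ) : sg p m n ^ t =
    MonoidAlgebra.single (Multiplicative.ofAdd ((t : ZMod (p ^ n)))) 1 := by
  have : sg p m n ^ t = MonoidAlgebra.of (Rm p m) (Cyc p n)
      ((Multiplicative.ofAdd (1 : ZMod (p ^ n))) ^ t) := by
    rw [map_pow]; rfl
  rw [this, ← ofAdd_nsmul]
  have : (t • (1 : ZMod (p ^ n))) = ((t : ZMod (p ^ n))) := by simp
  rw [this]
  rfl

lemma sg_pow_q (p m n : ℕ) : sg p m n ^ (p ^ n) = 1 := by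
  rw [sg_pow]
  simp only [ZMod.natCast_self, ofAdd_zero]
  rfl

lemma algebraMap_RG (p m n : ℕ) (z : Rm p m) :
    algebraMap (Rm p m) (RG p m n) z = MonoidAlgebra.single 1 z := by
  simp [MonoidAlgebra.coe_algebraMap]

lemma intCast_RG (p m n : ℕ) (z : ℤ) :
    (z : RG p m n) = MonoidAlgebra.single 1 (z : Rm p m) := by
  rw [← algebraMap_RG, map_intCast]

lemma pm_zero (p m n : ℕ) : (p : RG p m n) ^ m = 0 := by
  have : ((p : RG p m n)) ^ m = (((p : ℤ) ^ m : ℤ) : RG p m n) := by push_cast; ring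
  rw [this, intCast_RG]
  have : (((p:ℤ) ^ m : ℤ) : Rm p m) = 0 := by
    rw [ZMod.intCast_zmod_eq_zero_iff_dvd]; exact_mod_cast dvd_refl _
  rw [this]; exact MonoidAlgebra.single_zero _

noncomputable def Th (p m n : ℕ) : Polynomial ℤ →ₐ[ℤ] RG p m n := Polynomial.aeval (sg p m n)

lemma Th_single (p m n : ℕ) (t : ℕ) (z : ℤ) :
    Th p m n (C z * X ^ t) = MonoidAlgebra.single (Multiplicative.ofAdd ((t : ZMod (p ^ n)))) (z : Rm p m) := by
  simp only [Th, map_mul, map_pow, aeval_X, aeval_C]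
  rw [sg_pow]
  have : (algebraMap ℤ (RG p m n)) z = (z : RG p m n) := by simp
  rw [this, intCast_RG, MonoidAlgebra.single_mul_single, one_mul, mul_one]

lemma Th_surj (p m n : ℕ) (hp : p ≠ 0) (x : RG p m n) : ∃ F : Polynomial ℤ, Th p m n F = x := by
  haveI : NeZero (p ^ n) := ⟨pow_ne_zero n hp⟩
  haveI : NeZero (p ^ m) := ⟨pow_ne_zero m hp⟩
  induction x using MonoidAlgebra.induction with
  | zero => exact ⟨0, map_zero _⟩
  | single_add γ b f _ _ ih =>
    obtain ⟨F, hF⟩ := ih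
    refine ⟨C (b.val : ℤ) * X ^ (γ.toAdd.val) + F, ?_⟩
    rw [map_add, hF, Th_single]
    congr 1
    rw [ZMod.natCast_rightInverse (Multiplicative.toAdd γ), ofAdd_toAdd]
    congr 1
    rw [Int.cast_natCast]
    exact ZMod.natCast_rightInverse b

lemma Th_coeff_dvd (p m n : ℕ) (hp : 2 ≤ p) (R : Polynomial ℤ)
    (hdeg : R.natDegree < p ^ n) (h : Th p m n R = 0) :
    ∀ t, ((p : ℤ)) ^ m ∣ R.coeff t := by
  intro t
  by_cases ht : t < p ^ n
  swap
  · rw [Polynomial.coeff_eq_zero_of_natDegree_lt (by omega)]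
    exact dvd_zero _
  · have hsum : Th p m n R = ∑ i ∈ Finset.range (p ^ n),
        MonoidAlgebra.single (Multiplicative.ofAdd ((i : ZMod (p ^ n)))) ((R.coeff i : Rm p m)) := by
      rw [Th, aeval_eq_sum_range' hdeg]
      refine Finset.sum_congr rfl fun i _ => ?_
      rw [zsmul_eq_mul, sg_pow, intCast_RG, MonoidAlgebra.single_mul_single, one_mul, mul_one]
    rw [h] at hsum
    have happ := congrArg (fun f : RG p m n => f.coeff (Multiplicative.ofAdd ((t : ZMod (p ^ n))))) hsum
    simp only [MonoidAlgebra.coeff_zero, Finsupp.coe_zero, Pi.zero_apply] at happ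
    rw [MonoidAlgebra.coeff_sum, Finsupp.finset_sum_apply] at happ
    have hval : ∀ i ∈ Finset.range (p ^ n), i ≠ t →
        (MonoidAlgebra.single (Multiplicative.ofAdd ((i : ZMod (p ^ n)))) ((R.coeff i : Rm p m))).coeff
          (Multiplicative.ofAdd ((t : ZMod (p ^ n)))) = 0 := by
      intro i hi hit
      rw [MonoidAlgebra.coeff_single, Finsupp.single_apply, if_neg]
      intro hc
      apply hit
      have : ((i : ZMod (p ^ n))) = ((t : ZMod (p ^ n))) := Multiplicative.ofAdd.injective hc
      have hi' := ZMod.val_cast_of_lt (Finset.mem_range.mp hi)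
      have ht' := ZMod.val_cast_of_lt ht
      rw [← hi', ← ht', this]
    rw [Finset.sum_eq_single t hval (by intro hc; exact absurd (Finset.mem_range.mpr ht) hc)] at happ
    rw [MonoidAlgebra.coeff_single, Finsupp.single_apply, if_pos rfl] at happ
    have : (((p ^ m : ℕ) : ℤ)) ∣ R.coeff t := by
      rw [← ZMod.intCast_zmod_eq_zero_iff_dvd]
      exact_mod_cast happ.symm
    exact_mod_cast this

lemma Th_ker (p m n : ℕ) (hp : 2 ≤ p) (F : Polynomial ℤ) (h : Th p m n F = 0) :
    ∃ A B : Polynomial ℤ, F = (p : Polynomial ℤ) ^ m * A + (X ^ (p ^ n) - 1) * B := by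
  have hq : p ^ n ≠ 0 := pow_ne_zero _ (by omega)
  set gq : Polynomial ℤ := X ^ (p ^ n) - C 1 with hgq
  have hmono : gq.Monic := monic_X_pow_sub_C 1 hq
  have hg1 : gq ≠ 1 := by
    intro hc
    have h2 := natDegree_X_pow_sub_C (n := p ^ n) (r := (1 : ℤ))
    rw [← hgq, hc, natDegree_one] at h2
    exact hq h2.symm
  have hdiv : F %ₘ gq + gq * (F /ₘ gq) = F := modByMonic_add_div F gq
  have hThgq : Th p m n gq = 0 := by
    rw [hgq, map_sub, map_pow, Th, aeval_X, sg_pow_q, aeval_C, map_one, sub_self]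
  have hThR : Th p m n (F %ₘ gq) = 0 := by
    have h2 := congrArg (Th p m n) hdiv
    rw [map_add, map_mul, hThgq, zero_mul, add_zero] at h2
    rw [h2, h]
  have hdeg : (F %ₘ gq).natDegree < p ^ n := by
    have h2 := natDegree_modByMonic_lt F hmono hg1
    rwa [hgq, natDegree_X_pow_sub_C] at h2
  obtain ⟨A, hA⟩ := (C_dvd_iff_dvd_coeff ((p : ℤ) ^ m) (F %ₘ gq)).2 (Th_coeff_dvd p m n hp _ hdeg hThR)
  refine ⟨A, F /ₘ gq, ?_⟩
  calc F = F %ₘ gq + gq * (F /ₘ gq) := hdiv.symm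
  _ = (p : Polynomial ℤ) ^ m * A + (X ^ (p ^ n) - 1) * (F /ₘ gq) := by
      rw [hA, hgq]
      simp only [map_pow, map_natCast, map_one, map_ofNat]

lemma dvd_of_redp_zero (p : ℕ) (F : Polynomial ℤ)
    (h : F.map (Int.castRingHom (ZMod p)) = 0) : ∃ G, F = (p : Polynomial ℤ) * G := by
  have hc : ∀ i, (p : ℤ) ∣ F.coeff i := by
    intro i
    have := congrArg (fun q => Polynomial.coeff q i) h
    simp only [Polynomial.coeff_map, Polynomial.coeff_zero] at this
    rw [← ZMod.intCast_zmod_eq_zero_iff_dvd]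
    exact_mod_cast this
  obtain ⟨G, hG⟩ := (C_dvd_iff_dvd_coeff ((p : ℤ)) F).2 hc
  exact ⟨G, by rw [hG, map_natCast]⟩

lemma divide_out (p K : ℕ) (hp : p.Prime) (hK : K ≠ 0) (j : ℕ) : ∀ (B V : Polynomial ℤ),
    (p : Polynomial ℤ) ^ j * B = (X ^ K - 1) * V → ∃ W, B = (X ^ K - 1) * W := by
  haveI := Fact.mk hp
  induction j with
  | zero => exact fun B V h => ⟨V, by simpa using h⟩
  | succ j ih =>
    intro B V h
    have hmap := congrArg (Polynomial.map (Int.castRingHom (ZMod p))) h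
    simp only [Polynomial.map_mul, Polynomial.map_pow, Polynomial.map_natCast,
      Polynomial.map_sub, Polynomial.map_one, Polynomial.map_X] at hmap
    rw [CharP.cast_eq_zero (Polynomial (ZMod p)) p, zero_pow (by omega), zero_mul] at hmap
    have hXK : (X ^ K - 1 : Polynomial (ZMod p)) ≠ 0 := by
      have := Polynomial.X_pow_sub_C_ne_zero (R := ZMod p) (Nat.pos_of_ne_zero hK) (1 : ZMod p)
      simpa using this
    have hV0 : V.map (Int.castRingHom (ZMod p)) = 0 :=
      (mul_eq_zero.mp hmap.symm).resolve_left hXK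
    obtain ⟨V₁, hV₁⟩ := dvd_of_redp_zero p V hV0
    apply ih B V₁
    have hpne : (p : Polynomial ℤ) ≠ 0 := by
      simpa using fun hc => hp.ne_zero (by exact_mod_cast hc)
    apply mul_left_cancel₀ hpne
    calc (p : Polynomial ℤ) * ((p : Polynomial ℤ) ^ j * B) = (p : Polynomial ℤ) ^ (j+1) * B := by ring
    _ = (X ^ K - 1) * ((p:Polynomial ℤ) * V₁) := by rw [h, hV₁]
    _ = (p : Polynomial ℤ) * ((X ^ K - 1) * V₁) := by ring

end Aux
open Polynomial

set_option maxHeartbeats 2000000 in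
/-- Lemma 4.2 (`le:indecomp1`). -/
theorem indecomp1 (p n m : ℕ) (hp : p.Prime) (hn : 1 ≤ n) (hm : 2 ≤ m)
    (a : ℕ → WithBot ℕ) (d : ℤ) (hyp : Hyp p n m a d)
    (k : ℕ) (hk : a (m - 1) = (k : WithBot ℕ))
    (v : Xmod p m n a d) (g : Fin m → RG p m n)
    (heq : (sg p m n ^ p ^ k - 1) • v =
      ((p : RG p m n) ^ (m - 1)) • ∑ i : Fin m, g i • Xx p m n a d i) :
    (p : RG p m n) ^ (m - 1) * g ⟨m - 1, by omega⟩ ∈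
      Ideal.span {(p : RG p m n) ^ (m - 1) * (sg p m n - 1) ^ (p ^ k - 1)} := by
  classical
  haveI := Fact.mk hp
  have hp2 : 2 ≤ p := hp.two_le
  have hkn : k ≤ n := by
    have h1 := hyp.1 (m - 1) (by omega)
    rw [hk] at h1
    exact_mod_cast h1
  obtain ⟨δ, hd⟩ := hyp.2.1
  obtain ⟨w, hw⟩ := Submodule.Quotient.mk_surjective (Xrel p m n a d) v
  have hmem : ((sg p m n ^ p ^ k - 1) • w -
      ((p : RG p m n) ^ (m - 1)) • ∑ i : Fin m, g i • (Pi.single i.succ 1 : Fin (m+1) → RG p m n))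
      ∈ Xrel p m n a d := by
    rw [← Submodule.Quotient.eq]
    rw [← Submodule.mkQ_apply, ← Submodule.mkQ_apply, map_smul, map_smul, map_sum]
    simp only [map_smul, Submodule.mkQ_apply, hw]
    rw [heq]
    rfl
  rw [Xrel, Submodule.mem_span_insert] at hmem
  obtain ⟨c, z, hzmem, hzeq⟩ := hmem
  rw [Submodule.mem_span_range_iff_exists_fun] at hzmem
  obtain ⟨cc, hcc⟩ := hzmem
  rw [← hcc] at hzeq
  -- helper sums
  have hs0 : ∀ (f : Fin m → RG p m n),
      (∑ i : Fin m, f i • (Pi.single i.succ (1 : RG p m n) : Fin (m+1) → RG p m n)) 0 = 0 := by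
    intro f
    rw [Finset.sum_apply]
    apply Finset.sum_eq_zero
    intro i _
    rw [Pi.smul_apply, Pi.single_eq_of_ne (Fin.succ_ne_zero i).symm, smul_zero]
  set M : Fin (m + 1) := Fin.succ ⟨m - 1, by omega⟩ with hM
  have hsM : ∀ (f : Fin m → RG p m n),
      (∑ i : Fin m, f i • (Pi.single i.succ (1 : RG p m n) : Fin (m+1) → RG p m n)) M
        = f ⟨m - 1, by omega⟩ := by
    intro f
    rw [Finset.sum_apply]
    rw [Finset.sum_eq_single (⟨m - 1, by omega⟩ : Fin m)]
    · rw [Pi.smul_apply, hM, Pi.single_eq_same, smul_eq_mul, mul_one]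
    · intro i _ hne
      rw [Pi.smul_apply, Pi.single_eq_of_ne, smul_zero]
      rw [hM]
      exact fun hc => hne (Fin.succ_injective _ hc.symm)
    · intro hc
      exact absurd (Finset.mem_univ _) hc
  -- coordinate 0 equation
  have hE0 : (sg p m n ^ p ^ k - 1) * w 0 = c * (sg p m n - (d : RG p m n)) := by
    have h0 := congrFun hzeq (0 : Fin (m + 1))
    simp only [Pi.sub_apply, Pi.add_apply, Pi.smul_apply, Finset.sum_apply, smul_eq_mul,
      Pi.single_apply, Fin.succ_ne_zero, if_neg, if_pos, eq_comm (a := (0 : Fin (m+1))),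
      mul_ite, mul_one, mul_zero, Finset.sum_const_zero, sub_zero, add_zero,
      if_false, Finset.sum_ite_eq] at h0
    exact h0 -- probe
  -- coordinate M equation
  have hEm : ((p : RG p m n) ^ (m - 1)) * ((g ⟨m - 1, by omega⟩ : RG p m n) - c) =
      (sg p m n ^ p ^ k - 1) * (w M - cc ⟨m - 1, by omega⟩) := by
    have h0 := congrFun hzeq M
    have hsig : sigmaPow p m n (a (m - 1)) = sg p m n ^ p ^ k := by rw [hk]; rfl
    simp only [Pi.sub_apply, Pi.add_apply, Pi.smul_apply, Finset.sum_apply, smul_eq_mul,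
      Pi.single_apply, mul_ite, mul_one, mul_zero, Finset.mem_univ,
      if_true, if_pos, hM, Fin.succ_inj, Fin.succ_ne_zero, if_neg, if_false, zero_sub,
      Finset.sum_ite_eq, Finset.sum_ite_eq', Fin.val_mk, hsig] at h0
    linear_combination -h0
  -- lifts to ℤ[X]
  set g' : RG p m n := g ⟨m - 1, by omega⟩ with hg'
  obtain ⟨Lb, hLb⟩ := Th_surj p m n (by omega) (g' - c)
  obtain ⟨Lc, hLc⟩ := Th_surj p m n (by omega) c
  obtain ⟨Lw0, hLw0⟩ := Th_surj p m n (by omega) (w 0)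
  obtain ⟨Lu, hLu⟩ := Th_surj p m n (by omega) (w M - cc ⟨m - 1, by omega⟩)
  have hThp : Th p m n ((p : ℕ) : Polynomial ℤ) = (p : RG p m n) := map_natCast _ p
  have hThX : Th p m n X = sg p m n := aeval_X _
  have hThd : Th p m n (C d) = (d : RG p m n) := by
    simp [Th, aeval_C]
  have hker1 : Th p m n ((p : Polynomial ℤ) ^ (m - 1) * Lb - (X ^ (p ^ k) - 1) * Lu) = 0 := by
    simp only [map_sub, map_mul, map_pow, hThp, hThX, hLb, hLu, map_one]
    linear_combination hEm
  obtain ⟨A3, A4, hk1⟩ := Th_ker p m n hp2 _ hker1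
  have hker0 : Th p m n ((X ^ (p ^ k) - 1) * Lw0 - Lc * (X - C d)) = 0 := by
    simp only [map_sub, map_mul, map_pow, hThX, hLw0, hLc, hThd, map_one]
    linear_combination hE0
  obtain ⟨A1, A2, hk0⟩ := Th_ker p m n hp2 _ hker0
  have hgeom : (X ^ (p ^ k) - 1 : Polynomial ℤ) *
      (∑ i ∈ Finset.range (p ^ (n - k)), (X ^ (p ^ k)) ^ i) = X ^ (p ^ n) - 1 := by
    rw [mul_comm, geom_sum_mul, ← pow_mul]
    congr 2
    rw [← pow_add]
    congr 1
    omega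
  have hm1 : (p : Polynomial ℤ) ^ (m - 1) * (p : Polynomial ℤ) = (p : Polynomial ℤ) ^ m := by
    rw [← pow_succ]
    congr 1
    omega
  have hdiv0 : (p : Polynomial ℤ) ^ (m - 1) * (Lb - (p : Polynomial ℤ) * A3)
      = (X ^ (p ^ k) - 1) *
        (Lu + (∑ i ∈ Finset.range (p ^ (n - k)), (X ^ (p ^ k)) ^ i) * A4) := by
    linear_combination hk1 - A4 * hgeom - A3 * hm1
  obtain ⟨W, hW⟩ := divide_out p (p ^ k) hp (by positivity) (m - 1) _ _ hdiv0
  -- mod p reduction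
  set φ : Polynomial ℤ →+* Polynomial (ZMod p) := Polynomial.mapRingHom (Int.castRingHom (ZMod p)) with hφ
  have hφp : φ ((p : ℕ) : Polynomial ℤ) = 0 := by
    rw [map_natCast, CharP.cast_eq_zero (Polynomial (ZMod p)) p]
  have hφd : φ (C d) = 1 := by
    rw [hφ, Polynomial.coe_mapRingHom, Polynomial.map_C, hd]
    push_cast
    simp [CharP.cast_eq_zero (ZMod p) p]
  have hXK : (X : Polynomial (ZMod p)) ^ (p ^ k) - 1 = (X - 1) ^ (p ^ k) := by
    rw [sub_pow_char_pow, one_pow]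
  have hXq : (X : Polynomial (ZMod p)) ^ (p ^ n) - 1 = (X - 1) ^ (p ^ n) := by
    rw [sub_pow_char_pow, one_pow]
  have hKsucc : (X - 1 : Polynomial (ZMod p)) ^ (p ^ k) =
      (X - 1) ^ (p ^ k - 1) * (X - 1) := by
    rw [← pow_succ]
    congr 1
    have : 1 ≤ p ^ k := Nat.one_le_pow _ _ (by omega)
    omega
  have hqsplit : (X - 1 : Polynomial (ZMod p)) ^ (p ^ n) =
      (X - 1) ^ (p ^ k - 1) * ((X - 1) ^ (p ^ n - p ^ k) * (X - 1)) := by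
    rw [← mul_assoc, ← pow_add, ← pow_succ]
    congr 1
    have h1 : 1 ≤ p ^ k := Nat.one_le_pow _ _ (by omega)
    have h2 : p ^ k ≤ p ^ n := Nat.pow_le_pow_right (by omega) hkn
    omega
  have hbar0 := congrArg φ hk0
  simp only [map_sub, map_mul, map_pow, map_add, map_one, hφ, Polynomial.coe_mapRingHom] at hbar0
  rw [Polynomial.map_X] at hbar0
  have hmapp : (Polynomial.map (Int.castRingHom (ZMod p)) ((p : ℕ) : Polynomial ℤ)) = 0 := by
    rw [Polynomial.map_natCast, CharP.cast_eq_zero (Polynomial (ZMod p)) p]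
  have hmapd : (Polynomial.map (Int.castRingHom (ZMod p)) (C d)) = 1 := by
    rw [Polynomial.map_C, hd]
    push_cast
    simp
  rw [hmapp, hmapd, zero_pow (by omega : m ≠ 0), zero_mul, zero_add, hXK, hXq] at hbar0
  have hX1 : (X - 1 : Polynomial (ZMod p)) ≠ 0 := by
    have h7 := Polynomial.X_sub_C_ne_zero (R := ZMod p) (1 : ZMod p)
    simpa using h7
  have hfac : (X - 1 : Polynomial (ZMod p)) *
      ((Lc.map (Int.castRingHom (ZMod p))) -
        ((X - 1) ^ (p ^ k - 1) * (Lw0.map (Int.castRingHom (ZMod p))) -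
         (X - 1) ^ (p ^ k - 1) * ((X - 1) ^ (p ^ n - p ^ k) * (A2.map (Int.castRingHom (ZMod p)))))) = 0 := by
    linear_combination -hbar0 + (Lw0.map (Int.castRingHom (ZMod p))) * hKsucc -
      (A2.map (Int.castRingHom (ZMod p))) * hqsplit
  have hLcbar := (mul_eq_zero.mp hfac).resolve_left hX1
  have hWbar := congrArg φ hW
  simp only [map_sub, map_mul, map_pow, map_add, map_one, hφ, Polynomial.coe_mapRingHom] at hWbar
  rw [Polynomial.map_X, hmapp, zero_mul, sub_zero, hXK] at hWbar
  set T : Polynomial ℤ := (X - 1) * W + Lw0 - (X - 1) ^ (p ^ n - p ^ k) * A2 with hT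
  have hfinal0 : ((Lb + Lc) - (X - 1) ^ (p ^ k - 1) * T).map (Int.castRingHom (ZMod p)) = 0 := by
    simp only [hT, Polynomial.map_add, Polynomial.map_sub, Polynomial.map_mul,
      Polynomial.map_pow, Polynomial.map_X, Polynomial.map_one]
    linear_combination hWbar + (W.map (Int.castRingHom (ZMod p))) * hKsucc + hLcbar
  obtain ⟨Z, hZ⟩ := dvd_of_redp_zero p _ hfinal0
  have hgrg : g' = (sg p m n - 1) ^ (p ^ k - 1) * Th p m n T + (p : RG p m n) * Th p m n Z := by
    have h5 := congrArg (Th p m n) hZ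
    simp only [map_add, map_sub, map_mul, map_pow, hThX, hThp, map_one, hLb, hLc] at h5
    linear_combination h5
  have hpm0 : (p : RG p m n) ^ (m - 1) * (p : RG p m n) = 0 := by
    have h6 : (p : RG p m n) ^ (m - 1) * (p : RG p m n) = (p : RG p m n) ^ m := by
      rw [← pow_succ]
      congr 1
      omega
    rw [h6, pm_zero]
  rw [Ideal.mem_span_singleton']
  refine ⟨Th p m n T, ?_⟩
  rw [hgrg]
  linear_combination -(Th p m n Z) * hpm0
end
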